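/- arXiv:1204.1408 — 2 statements merged into one kernel-verified Lean document; each statement's English description precedes it below -/
import Mathlib

section
/- Let n ≥ 4 and let V be a real inner product space of dimension l with 3 ≤ l ≤ n. Let B, B̄ be symmetric bilinear forms on V whose associated tensors S_ijkl = B_ik B_jl − B_il B_jk + (1/(n−2)) Σ_m (δ_ik B_jm B_ml + δ_jl B_im B_mk − δ_il B_jm B_mk − δ_jk B_im B_ml) (indices ranging 1..l) coincide: S = S̄. Then there exists an orthonormal basis of V in which B̄ is diagonal and at least one off-diagonal entry of the matrix of B vanishes. -/
open Matrix BigOperators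

/-- The Weyl-tensor-like tensor associated to `B` on an `l`-dimensional space,
with the factor `1/(n−2)` (indices ranging over `Fin l`). -/
noncomputable def mobiusS (n l : ℕ) (B : Matrix (Fin l) (Fin l) ℝ)
    (i j k m : Fin l) : ℝ :=
  B i k * B j m - B i m * B j k +
    (1 / ((n : ℝ) - 2)) * ∑ r : Fin l,
      ((if i = k then (1 : ℝ) else 0) * (B j r * B r m)
        + (if j = m then (1 : ℝ) else 0) * (B i r * B r k)
        - (if i = m then (1 : ℝ) else 0) * (B j r * B r k)
        - (if j = k then (1 : ℝ) else 0) * (B i r * B r m))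

variable {l : ℕ}

lemma ite_sum_helper {l : ℕ} {c : Prop} [Decidable c] (f : Fin l → ℝ) :
    (∑ r, (if c then (1:ℝ) else 0) * f r) = if c then ∑ r, f r else 0 := by
  by_cases h : c <;> simp [h]

lemma mobiusS_eq (n l : ℕ) (M : Matrix (Fin l) (Fin l) ℝ) (i j k m : Fin l) :
    mobiusS n l M i j k m = M i k * M j m - M i m * M j k +
      (1 / ((n : ℝ) - 2)) * ((if i = k then (M*M) j m else 0)
        + (if j = m then (M*M) i k else 0)
        - (if i = m then (M*M) j k else 0)
        - (if j = k then (M*M) i m else 0)) := by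
  unfold mobiusS
  congr 2
  rw [Finset.sum_sub_distrib, Finset.sum_sub_distrib, Finset.sum_add_distrib,
    ite_sum_helper, ite_sum_helper, ite_sum_helper, ite_sum_helper]
  simp only [Matrix.mul_apply]

lemma sum4_prod (P X Y : Matrix (Fin l) (Fin l) ℝ) (i j k m : Fin l) :
    (∑ a, ∑ b, ∑ c, ∑ d, (P i a * P j b * P k c * P m d) * (X a c * Y b d))
      = (P*X*Pᵀ) i k * (P*Y*Pᵀ) j m := by
  have h1 : (P*X*Pᵀ) i k = ∑ a, ∑ c, P i a * X a c * P k c := by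
    simp [Matrix.mul_apply, Matrix.transpose_apply, Finset.sum_mul, mul_assoc]
    exact Finset.sum_comm
  have h2 : (P*Y*Pᵀ) j m = ∑ b, ∑ d, P j b * Y b d * P m d := by
    simp [Matrix.mul_apply, Matrix.transpose_apply, Finset.sum_mul, mul_assoc]
    exact Finset.sum_comm
  rw [h1, h2, Finset.sum_mul_sum]
  refine Finset.sum_congr rfl fun a _ => ?_
  refine Finset.sum_congr rfl fun b _ => ?_
  rw [Finset.sum_mul_sum]
  exact Finset.sum_congr rfl fun c _ => Finset.sum_congr rfl fun d _ => by ring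

lemma sum4_prod' (P X Y : Matrix (Fin l) (Fin l) ℝ) (i j k m : Fin l) :
    (∑ a, ∑ b, ∑ c, ∑ d, (P i a * P j b * P k c * P m d) * (X a d * Y b c))
      = (P*X*Pᵀ) i m * (P*Y*Pᵀ) j k := by
  rw [← sum4_prod P X Y i j m k]
  refine Finset.sum_congr rfl fun a _ => Finset.sum_congr rfl fun b _ => ?_
  rw [Finset.sum_comm]
  exact Finset.sum_congr rfl fun c _ => Finset.sum_congr rfl fun d _ => by ring

lemma ite_eq_entry_mul {c : Prop} [Decidable c] (x : ℝ) :
    (if c then x else 0) = (if c then (1:ℝ) else 0) * x := by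
  by_cases h : c <;> simp [h]

lemma mobius_conj (n : ℕ) (P M : Matrix (Fin l) (Fin l) ℝ) (hP : Pᵀ * P = 1)
    (i j k m : Fin l) :
    mobiusS n l (P * M * Pᵀ) i j k m
      = ∑ a, ∑ b, ∑ c, ∑ d, (P i a * P j b * P k c * P m d) * mobiusS n l M a b c d := by
  have hP' : P * Pᵀ = 1 := mul_eq_one_comm.mp hP
  have hsq : (P*M*Pᵀ) * (P*M*Pᵀ) = P*(M*M)*Pᵀ := by
    calc (P*M*Pᵀ) * (P*M*Pᵀ) = P*M*(Pᵀ*P)*(M*Pᵀ) := by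
          simp only [Matrix.mul_assoc]
      _ = P*(M*M)*Pᵀ := by rw [hP]; simp only [Matrix.mul_one, Matrix.mul_assoc]
  have expand : ∀ a b c d : Fin l, (P i a * P j b * P k c * P m d) * mobiusS n l M a b c d
      = (P i a * P j b * P k c * P m d) * (M a c * M b d)
        - (P i a * P j b * P k c * P m d) * (M a d * M b c)
        + (1 / ((n : ℝ) - 2)) * ((P i a * P j b * P k c * P m d) * (((1 : Matrix (Fin l) (Fin l) ℝ) a c) * (M*M) b d))
        + (1 / ((n : ℝ) - 2)) * ((P i a * P j b * P k c * P m d) * (((M*M) a c) * (1 : Matrix (Fin l) (Fin l) ℝ) b d))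
        - (1 / ((n : ℝ) - 2)) * ((P i a * P j b * P k c * P m d) * (((1 : Matrix (Fin l) (Fin l) ℝ) a d) * (M*M) b c))
        - (1 / ((n : ℝ) - 2)) * ((P i a * P j b * P k c * P m d) * (((M*M) a d) * (1 : Matrix (Fin l) (Fin l) ℝ) b c)) := by
    intro a b c d
    rw [mobiusS_eq,
      ite_eq_entry_mul (c := a = c) ((M*M) b d), ite_eq_entry_mul (c := b = d) ((M*M) a c),
      ite_eq_entry_mul (c := a = d) ((M*M) b c), ite_eq_entry_mul (c := b = c) ((M*M) a d),
      ← Matrix.one_apply (i := a) (j := c), ← Matrix.one_apply (i := b) (j := d),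
      ← Matrix.one_apply (i := a) (j := d), ← Matrix.one_apply (i := b) (j := c)]
    ring
  simp only [expand, Finset.sum_add_distrib, Finset.sum_sub_distrib, ← Finset.mul_sum]
  rw [sum4_prod P M M, sum4_prod' P M M, sum4_prod P 1 (M*M), sum4_prod P (M*M) 1,
    sum4_prod' P 1 (M*M), sum4_prod' P (M*M) 1, Matrix.mul_one, hP', mobiusS_eq, hsq]
  simp only [Matrix.one_apply]
  split_ifs <;> ring

lemma sum_split2 (i j : Fin l) (hij : i ≠ j) (f : Fin l → ℝ)
    (h : ∀ r, r ≠ i → r ≠ j → f r = 0) : ∑ r, f r = f i + f j := by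
  have hs : ({i, j} : Finset (Fin l)) ⊆ Finset.univ := Finset.subset_univ _
  have := Finset.sum_subset hs (fun x _ hx => by
    simp only [Finset.mem_insert, Finset.mem_singleton, not_or] at hx
    exact h x hx.1 hx.2)
  rw [← this, Finset.sum_pair hij]

noncomputable def rot (l : ℕ) (i j : Fin l) (θ : ℝ) : Matrix (Fin l) (Fin l) ℝ :=
  Matrix.of fun p q =>
    if p = i then (if q = i then Real.cos θ else if q = j then Real.sin θ else 0)
    else if p = j then (if q = i then -Real.sin θ else if q = j then Real.cos θ else 0)
    else if p = q then 1 else 0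

lemma rot_orth (i j : Fin l) (hij : i ≠ j) (θ : ℝ) : (rot l i j θ)ᵀ * rot l i j θ = 1 := by
  ext p q
  rw [Matrix.mul_apply]
  simp only [Matrix.transpose_apply]
  by_cases hp1 : p = i
  · by_cases hq1 : q = i
    · rw [hp1, hq1, sum_split2 i j hij _
        (fun r h1 h2 => by simp [rot, h1, h2])]
      simp [rot, hij, Ne.symm hij, Matrix.one_apply]
      nlinarith [Real.sin_sq_add_cos_sq θ]
    · by_cases hq2 : q = j
      · rw [hp1, hq2, sum_split2 i j hij _
          (fun r h1 h2 => by simp [rot, h1, h2])]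
        simp [rot, hij, Ne.symm hij, Matrix.one_apply]
        ring
      · rw [hp1, Finset.sum_eq_zero (fun r _ => ?_)]
        · simp [Matrix.one_apply, Ne.symm hq1]
        · by_cases h1 : r = i <;> by_cases h2 : r = j <;>
            simp [rot, h1, h2, hq1, hq2]
  · by_cases hp2 : p = j
    · by_cases hq1 : q = i
      · rw [hp2, hq1, sum_split2 i j hij _
          (fun r h1 h2 => by simp [rot, h1, h2])]
        simp [rot, hij, Ne.symm hij, Matrix.one_apply]
        ring
      · by_cases hq2 : q = j
        · rw [hp2, hq2, sum_split2 i j hij _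
            (fun r h1 h2 => by simp [rot, h1, h2])]
          simp [rot, hij, Ne.symm hij, Matrix.one_apply]
          nlinarith [Real.sin_sq_add_cos_sq θ]
        · rw [hp2, Finset.sum_eq_zero (fun r _ => ?_)]
          · simp [Matrix.one_apply, Ne.symm hq2]
          · by_cases h1 : r = i <;> by_cases h2 : r = j <;>
              simp [rot, h1, h2, hq1, hq2, hij, Ne.symm hij]
    · by_cases hq1 : q = i
      · rw [hq1, Finset.sum_eq_zero (fun r _ => ?_)]
        · simp [Matrix.one_apply, hp1]
        · by_cases h1 : r = i <;> by_cases h2 : r = j <;>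
            simp [rot, h1, h2, hp1, hp2, hij, Ne.symm hij]
      · by_cases hq2 : q = j
        · rw [hq2, Finset.sum_eq_zero (fun r _ => ?_)]
          · simp [Matrix.one_apply, hp2]
          · by_cases h1 : r = i <;> by_cases h2 : r = j <;>
              simp [rot, h1, h2, hp1, hp2, hij, Ne.symm hij]
        · rw [sum_split2 p i hp1 _ (fun r h1 h2 => ?_)]
          · simp [rot, hp1, hp2, hq1, hq2, Matrix.one_apply]
          · by_cases h3 : r = j <;> simp [rot, h1, h2, h3, hp1, hp2, hq1, hq2]

lemma mul_diag_mul (R D : Matrix (Fin l) (Fin l) ℝ) (hD : D.IsDiag) (p q : Fin l) :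
    (R * D * Rᵀ) p q = ∑ t, R p t * D t t * R q t := by
  rw [Matrix.mul_apply]
  simp only [Matrix.transpose_apply]
  refine Finset.sum_congr rfl fun t _ => ?_
  have h1 : (R * D) p t = R p t * D t t := by
    rw [Matrix.mul_apply]
    exact Finset.sum_eq_single t (fun r _ hr => by rw [hD hr, mul_zero]) (by simp)
  rw [h1]

lemma rot_fix_diag (D : Matrix (Fin l) (Fin l) ℝ) (hD : D.IsDiag) (i j : Fin l)
    (hij : i ≠ j) (hDij : D i i = D j j) (θ : ℝ) :
    rot l i j θ * D * (rot l i j θ)ᵀ = D := by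
  ext p q
  rw [mul_diag_mul _ _ hD]
  by_cases hp1 : p = i
  · by_cases hq1 : q = i
    · rw [hp1, hq1, sum_split2 i j hij _ (fun r h1 h2 => by simp [rot, h1, h2])]
      simp [rot, hij, Ne.symm hij]
      rw [hDij]
      linear_combination (D j j) * (Real.sin_sq_add_cos_sq θ)
    · by_cases hq2 : q = j
      · rw [hp1, hq2, sum_split2 i j hij _ (fun r h1 h2 => by simp [rot, h1, h2])]
        simp [rot, hij, Ne.symm hij, hD hij]
        rw [hDij]; ring
      · rw [hp1, Finset.sum_eq_zero (fun t _ => ?_), eq_comm]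
        · exact hD (fun h : i = q => hq1 h.symm)
        · by_cases h1 : t = i <;> by_cases h2 : t = j <;>
            simp [rot, h1, h2, hq1, hq2]
  · by_cases hp2 : p = j
    · by_cases hq1 : q = i
      · rw [hp2, hq1, sum_split2 i j hij _ (fun r h1 h2 => by simp [rot, h1, h2])]
        simp [rot, hij, Ne.symm hij, hD (Ne.symm hij)]
        rw [hDij]; ring
      · by_cases hq2 : q = j
        · rw [hp2, hq2, sum_split2 i j hij _ (fun r h1 h2 => by simp [rot, h1, h2])]
          simp [rot, hij, Ne.symm hij]
          rw [hDij]
          linear_combination (D j j) * (Real.sin_sq_add_cos_sq θ)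
        · rw [hp2, Finset.sum_eq_zero (fun t _ => ?_), eq_comm]
          · exact hD (fun h : j = q => hq2 h.symm)
          · by_cases h1 : t = i <;> by_cases h2 : t = j <;>
              simp [rot, h1, h2, hq1, hq2, hij, Ne.symm hij]
    · by_cases hq1 : q = i
      · rw [hq1, Finset.sum_eq_zero (fun t _ => ?_), eq_comm]
        · exact hD hp1
        · by_cases h1 : t = i <;> by_cases h2 : t = j <;>
            simp [rot, h1, h2, hp1, hp2, hij, Ne.symm hij]
      · by_cases hq2 : q = j
        · rw [hq2, Finset.sum_eq_zero (fun t _ => ?_), eq_comm]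
          · exact hD hp2
          · by_cases h1 : t = i <;> by_cases h2 : t = j <;>
              simp [rot, h1, h2, hp1, hp2, hij, Ne.symm hij]
        · rw [sum_split2 p i hp1 _ (fun t h1 h2 => ?_)]
          · by_cases h : p = q
            · simp [rot, hp1, hp2, hq1, hq2, ← h]
            · simp [rot, hp1, hp2, hq1, hq2, h, hD h]
              intro h'; exact absurd h'.symm h
          · by_cases h3 : t = j <;>
              simp [rot, h1, h2, h3, hp1, hp2, hq1, hq2, Ne.symm h1, Ne.symm h2]

lemma rot_entry (A : Matrix (Fin l) (Fin l) ℝ) (i j : Fin l) (hij : i ≠ j) (θ : ℝ) :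
    (rot l i j θ * A * (rot l i j θ)ᵀ) i j
      = Real.cos θ ^ 2 * A i j - Real.sin θ ^ 2 * A j i
        + Real.cos θ * Real.sin θ * (A j j - A i i) := by
  rw [Matrix.mul_apply]
  simp only [Matrix.transpose_apply]
  rw [sum_split2 i j hij _ (fun q h1 h2 => by simp [rot, h1, h2, hij, Ne.symm hij])]
  have e1 : (rot l i j θ * A) i i = Real.cos θ * A i i + Real.sin θ * A j i := by
    rw [Matrix.mul_apply, sum_split2 i j hij _ (fun p h1 h2 => by simp [rot, h1, h2])]
    simp [rot, hij, Ne.symm hij]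
  have e2 : (rot l i j θ * A) i j = Real.cos θ * A i j + Real.sin θ * A j j := by
    rw [Matrix.mul_apply, sum_split2 i j hij _ (fun p h1 h2 => by simp [rot, h1, h2])]
    simp [rot, hij, Ne.symm hij]
  rw [e1, e2]
  simp [rot, hij, Ne.symm hij]
  ring

lemma jacobi (A D : Matrix (Fin l) (Fin l) ℝ) (hA : Aᵀ = A) (hD : D.IsDiag)
    (i j : Fin l) (hij : i ≠ j) (hDij : D i i = D j j) :
    ∃ R : Matrix (Fin l) (Fin l) ℝ, Rᵀ * R = 1 ∧ R * D * Rᵀ = D ∧ (R * A * Rᵀ) i j = 0 := by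
  have hsymm : A j i = A i j := by
    conv_rhs => rw [← hA]
    rfl
  set g : ℝ → ℝ := fun θ => Real.cos θ ^ 2 * A i j - Real.sin θ ^ 2 * A j i
    + Real.cos θ * Real.sin θ * (A j j - A i i) with hg
  have hcont : Continuous g := by fun_prop
  have h0 : g 0 = A i j := by simp [hg]
  have hpi : g (Real.pi/2) = -A i j := by simp [hg, hsymm]
  have hmem : (0:ℝ) ∈ Set.uIcc (g 0) (g (Real.pi/2)) := by
    rw [h0, hpi, Set.mem_uIcc]
    rcases le_total (A i j) 0 with h | h
    · exact Or.inl ⟨h, by linarith⟩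
    · exact Or.inr ⟨by linarith, h⟩
  obtain ⟨θ0, _, hθ0⟩ := intermediate_value_uIcc hcont.continuousOn hmem
  exact ⟨rot l i j θ0, rot_orth i j hij θ0, rot_fix_diag D hD i j hij hDij θ0,
    by rw [rot_entry A i j hij θ0]; exact hθ0⟩

lemma core (n : ℕ) (hn : 4 ≤ n) (hl : 3 ≤ l)
    (A : Matrix (Fin l) (Fin l) ℝ) (hA : Aᵀ = A) (d : Fin l → ℝ)
    (hE : ∀ i j m : Fin l, i ≠ j → i ≠ m → j ≠ m →
      ((n:ℝ) - 2) * (A i i * A j m - A i j * A i m) + (A*A) j m = 0)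
    (hG : 4 ≤ l → ∀ i j k m : Fin l, i ≠ j → i ≠ k → i ≠ m → j ≠ k → j ≠ m → k ≠ m →
      A i k * A j m = A i m * A j k)
    (hH : ∀ i j : Fin l, i ≠ j →
      ((n:ℝ) - 2) * (A i i * A j j - A i j ^ 2) + ((A*A) i i + (A*A) j j)
        = ((n:ℝ) - 2) * (d i * d j) + (d i ^ 2 + d j ^ 2))
    (hne : ∀ i j : Fin l, i ≠ j → A i j ≠ 0)
    (hd : Function.Injective d) : False := by
  have hsymm : ∀ p q : Fin l, A q p = A p q := by
    intro p q
    conv_rhs => rw [← hA]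
    rfl
  have hn4 : (4:ℝ) ≤ (n:ℝ) := by exact_mod_cast hn
  have hn2 : ((n:ℝ) - 2) ≠ 0 := by intro h; linarith
  have hn3 : ((n:ℝ) - 3) ≠ 0 := by intro h; linarith
  have hthree : ∀ i j : Fin l, ∃ m : Fin l, m ≠ i ∧ m ≠ j := by
    intro i j
    have hcard : 1 < (Finset.univ.erase i : Finset (Fin l)).card := by
      rw [Finset.card_erase_of_mem (Finset.mem_univ i)]
      simp only [Finset.card_univ, Fintype.card_fin]
      omega
    obtain ⟨b, hb, hbj⟩ := Finset.exists_mem_ne hcard j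
    exact ⟨b, (Finset.mem_erase.mp hb).1, hbj⟩
  have hpair : ∀ i : Fin l, ∃ j k : Fin l, j ≠ k ∧ i ≠ j ∧ i ≠ k := by
    intro i
    obtain ⟨u, hu, -⟩ := hthree i i
    obtain ⟨v, hv1, hv2⟩ := hthree i u
    exact ⟨u, v, fun h => hv2 h.symm, Ne.symm hu, Ne.symm hv1⟩
  choose Jf Kf hJK hiJ hiK using hpair
  set g : Fin l → ℝ := fun i => A i (Jf i) * A i (Kf i) / A (Jf i) (Kf i) with hgdef
  have claim2 : ∀ i j m j' m' : Fin l, i ≠ j → i ≠ m → j ≠ m → i ≠ j' → i ≠ m' → j' ≠ m' →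
      A i j * A i m * A j' m' = A i j' * A i m' * A j m := by
    intro i j m j' m' hij him hjm hij' him' hj'm'
    rcases eq_or_lt_of_le hl with hl3 | hl4
    · -- l = 3
      have huniv : ∀ x : Fin l, x = i ∨ x = j ∨ x = m := by
        intro x
        by_contra hx
        push_neg at hx
        obtain ⟨h1, h2, h3⟩ := hx
        have hc : ({x, i, j, m} : Finset (Fin l)).card = 4 := by
          rw [Finset.card_insert_of_notMem (by simp [h1, h2, h3]),
            Finset.card_insert_of_notMem (by simp [hij, him]),
            Finset.card_insert_of_notMem (by simp [hjm]),
            Finset.card_singleton]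
        have hle := Finset.card_le_univ ({x, i, j, m} : Finset (Fin l))
        rw [hc] at hle
        simp only [Finset.card_univ, Fintype.card_fin] at hle
        omega
      rcases huniv j' with h | h | h
      · exact absurd h.symm hij'
      · rcases huniv m' with h' | h' | h'
        · exact absurd h'.symm him'
        · exact absurd (h.trans h'.symm) hj'm'
        · rw [h, h']
      · rcases huniv m' with h' | h' | h'
        · exact absurd h'.symm him'
        · rw [h, h', hsymm j m]; ring
        · exact absurd (h.trans h'.symm) hj'm'
    · -- 4 ≤ l
      have swap : ∀ p q r s : Fin l, p ≠ q → p ≠ r → p ≠ s → q ≠ r → q ≠ s → r ≠ s →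
          A p r * A q s = A p s * A q r := fun p q r s h1 h2 h3 h4 h5 h6 =>
        hG (by omega) p q r s h1 h2 h3 h4 h5 h6
      by_cases h1 : j' = j
      · by_cases h2 : m' = m
        · rw [h1, h2]
        · have hm'j : m' ≠ j := fun h => hj'm' (h1.trans h.symm)
          have key := swap i j m m' hij him him' hjm (Ne.symm hm'j) (Ne.symm h2)
          rw [h1]
          linear_combination (A i j) * key
      · by_cases h2 : j' = m
        · by_cases h3 : m' = j
          · rw [h2, h3, hsymm j m]; ring
          · have hm'm : m' ≠ m := fun h => hj'm' (h2.trans h.symm)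
            have key := swap i m j m' him hij him' (Ne.symm hjm) (Ne.symm hm'm)
              (fun h : j = m' => h3 h.symm)
            rw [hsymm j m] at key
            rw [h2]
            linear_combination (A i m) * key
        · by_cases h3 : m' = j
          · have key := swap i j m j' hij him hij' hjm (Ne.symm h1) (Ne.symm h2)
            rw [h3, hsymm j j']
            linear_combination (A i j) * key
          · by_cases h4 : m' = m
            · have key := swap i m j j' him hij hij' (Ne.symm hjm) (Ne.symm h2) (Ne.symm h1)
              rw [hsymm j' m, hsymm j m] at key
              rw [h4]
              linear_combination (A i m) * key
            · have key1 := swap i j' m m' hij' him him' (fun h : j' = m => h2 h)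
                hj'm' (Ne.symm h4)
              have key2 := swap i m j j' him hij hij' (Ne.symm hjm) (Ne.symm h2) (Ne.symm h1)
              rw [hsymm j' m, hsymm j m] at key2
              linear_combination (A i j) * key1 + (A i m') * key2
  have key : ∀ i j m : Fin l, i ≠ j → i ≠ m → j ≠ m → A i j * A i m = g i * A j m := by
    intro i j m hij him hjm
    have h := claim2 i j m (Jf i) (Kf i) hij him hjm (hiJ i) (hiK i) (hJK i)
    rw [hgdef]
    field_simp [hne (Jf i) (Kf i) (hJK i)]
    linear_combination h
  have keysq : ∀ i j : Fin l, i ≠ j → A i j ^ 2 = g i * g j := by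
    intro i j hij
    obtain ⟨m, hmi, hmj⟩ := hthree i j
    have k1 := key i j m hij (Ne.symm hmi) (Ne.symm hmj)
    have k2 := key j i m (Ne.symm hij) (Ne.symm hmj) (Ne.symm hmi)
    have hcancel : (A i j ^ 2 - g i * g j) * (A i m * A j m) = 0 := by
      rw [hsymm i j] at k2
      linear_combination (A i j * A j m) * k1 + (g i * A j m) * k2
    rcases mul_eq_zero.mp hcancel with h | h
    · linarith [sub_eq_zero.mp h]
    · exact absurd (mul_eq_zero.mp h)
        (by push_neg; exact ⟨hne i m (Ne.symm hmi), hne j m (Ne.symm hmj)⟩)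
  have hsdiff : ∀ j m : Fin l, ((Finset.univ \ {j}) \ {m} : Finset (Fin l)) = Finset.univ \ {j, m} := by
    intro j m
    ext x
    simp [not_or]
  have hA2off : ∀ j m : Fin l, j ≠ m → (A*A) j m
      = (A j j + A m m + ∑ r ∈ Finset.univ \ {j, m}, g r) * A j m := by
    intro j m hjm
    rw [Matrix.mul_apply,
      Finset.sum_eq_sum_sdiff_singleton_add (Finset.mem_univ j) (fun r => A j r * A r m)]
    have hm : m ∈ Finset.univ \ ({j} : Finset (Fin l)) := by simp [Ne.symm hjm]
    rw [Finset.sum_eq_sum_sdiff_singleton_add hm (fun r => A j r * A r m), hsdiff j m]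
    have hterm : ∀ r ∈ Finset.univ \ ({j, m} : Finset (Fin l)), A j r * A r m = g r * A j m := by
      intro r hr
      simp only [Finset.mem_sdiff, Finset.mem_insert, Finset.mem_singleton, not_or,
        Finset.mem_univ, true_and] at hr
      rw [← hsymm j r]
      exact key r j m hr.1 hr.2 hjm
    rw [Finset.sum_congr rfl hterm, ← Finset.sum_mul]
    ring
  have hconst : ∀ i j m : Fin l, i ≠ j → i ≠ m → j ≠ m →
      ((n:ℝ)-2) * (A i i - g i) + (A j j - g j) + (A m m - g m) + (∑ r, g r) = 0 := by
    intro i j m hij him hjm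
    have e1 := hE i j m hij him hjm
    rw [hA2off j m hjm, key i j m hij him hjm] at e1
    have hsum : ∑ r ∈ Finset.univ \ ({j, m} : Finset (Fin l)), g r = (∑ r, g r) - (g j + g m) := by
      rw [Finset.sum_sdiff_eq_sub (Finset.subset_univ _), Finset.sum_pair hjm]
    rw [hsum] at e1
    exact mul_right_cancel₀ (hne j m hjm) (show _ * A j m = 0 * A j m by linear_combination e1)
  obtain ⟨i0, j0, m0, hij0, him0, hjm0⟩ :
      ∃ i0 j0 m0 : Fin l, i0 ≠ j0 ∧ i0 ≠ m0 ∧ j0 ≠ m0 :=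
    ⟨⟨0, by omega⟩, ⟨1, by omega⟩, ⟨2, by omega⟩, by simp [Fin.ext_iff], by simp [Fin.ext_iff],
      by simp [Fin.ext_iff]⟩
  have hccconst : ∀ i j : Fin l, i ≠ j → A i i - g i = A j j - g j := by
    intro i j hij
    obtain ⟨m, hmi, hmj⟩ := hthree i j
    have e1 := hconst i j m hij (Ne.symm hmi) (Ne.symm hmj)
    have e2 := hconst j i m (Ne.symm hij) (Ne.symm hmj) (Ne.symm hmi)
    have h3 : ((n:ℝ)-3) * ((A i i - g i) - (A j j - g j)) = 0 := by linear_combination e1 - e2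
    rcases mul_eq_zero.mp h3 with h | h
    · exact absurd h hn3
    · linarith [sub_eq_zero.mp h]
  have hcc : ∀ i, A i i = g i + (A i0 i0 - g i0) := by
    intro i
    by_cases h : i = i0
    · rw [h]; ring
    · have := hccconst i i0 h; linarith
  have hGt : (∑ r, g r) = -(n:ℝ) * (A i0 i0 - g i0) := by
    have e := hconst i0 j0 m0 hij0 him0 hjm0
    have e1 := hcc j0
    have e2 := hcc m0
    linear_combination e - e1 - e2
  have hA2diag : ∀ i : Fin l, (A*A) i i
      = (g i + (A i0 i0 - g i0))^2 + g i * ((∑ r, g r) - g i) := by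
    intro i
    rw [Matrix.mul_apply,
      Finset.sum_eq_sum_sdiff_singleton_add (Finset.mem_univ i) (fun r => A i r * A r i)]
    have hterm : ∀ r ∈ Finset.univ \ ({i} : Finset (Fin l)), A i r * A r i = g i * g r := by
      intro r hr
      simp only [Finset.mem_sdiff, Finset.mem_univ, Finset.mem_singleton, true_and] at hr
      rw [hsymm i r]
      linear_combination keysq i r (Ne.symm hr)
    rw [Finset.sum_congr rfl hterm, ← Finset.mul_sum]
    have hs : ∑ r ∈ Finset.univ \ ({i} : Finset (Fin l)), g r = (∑ r, g r) - g i := by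
      rw [Finset.sum_sdiff_eq_sub (Finset.subset_univ _), Finset.sum_singleton]
    rw [hs, hcc i]
    ring
  have hHval : ∀ i j : Fin l, i ≠ j →
      ((n:ℝ)-2) * (d i * d j) + (d i^2 + d j^2) = (n:ℝ) * (A i0 i0 - g i0)^2 := by
    intro i j hij
    have e := hH i j hij
    rw [hA2diag i, hA2diag j, keysq i j hij, hcc i, hcc j, hGt] at e
    linear_combination - e
  have q1 := hHval i0 j0 hij0
  have q2 := hHval i0 m0 him0
  have q3 := hHval j0 m0 hjm0
  have q1' := hHval j0 i0 (Ne.symm hij0)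
  have f1 : (d j0 - d m0) * (((n:ℝ)-2) * d i0 + d j0 + d m0) = 0 := by
    linear_combination q1 - q2
  have f2 : (d i0 - d m0) * (((n:ℝ)-2) * d j0 + d i0 + d m0) = 0 := by
    linear_combination q1' - q3
  have hdj : d j0 ≠ d m0 := fun h => hjm0 (hd h)
  have hdi : d i0 ≠ d m0 := fun h => him0 (hd h)
  have g1 : ((n:ℝ)-2) * d i0 + d j0 + d m0 = 0 := by
    rcases mul_eq_zero.mp f1 with h | h
    · exact absurd (sub_eq_zero.mp h) hdj
    · exact h
  have g2 : ((n:ℝ)-2) * d j0 + d i0 + d m0 = 0 := by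
    rcases mul_eq_zero.mp f2 with h | h
    · exact absurd (sub_eq_zero.mp h) hdi
    · exact h
  have hfin : ((n:ℝ)-3) * (d i0 - d j0) = 0 := by linear_combination g1 - g2
  rcases mul_eq_zero.mp hfin with h | h
  · exact hn3 h
  · exact hij0 (hd (by linarith [sub_eq_zero.mp h]))

section extract
variable (n : ℕ) (A : Matrix (Fin l) (Fin l) ℝ) (d : Fin l → ℝ)

lemma extractE (hn2 : ((n:ℝ)-2) ≠ 0) (hA : Aᵀ = A) {i j m : Fin l}
    (h : mobiusS n l A i j i m = mobiusS n l (diagonal d) i j i m)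
    (hij : i ≠ j) (him : i ≠ m) (hjm : j ≠ m) :
    ((n:ℝ) - 2) * (A i i * A j m - A i j * A i m) + (A*A) j m = 0 := by
  have hsymm : A j i = A i j := by
    conv_rhs => rw [← hA]
    rfl
  rw [mobiusS_eq, mobiusS_eq, Matrix.diagonal_mul_diagonal] at h
  rw [if_pos rfl, if_pos rfl, if_neg hjm, if_neg hjm, if_neg him, if_neg him,
    if_neg (Ne.symm hij), if_neg (Ne.symm hij),
    Matrix.diagonal_apply_ne _ hjm, Matrix.diagonal_apply_ne _ him,
    Matrix.diagonal_apply_ne _ hjm, Matrix.diagonal_apply_ne _ (Ne.symm hij)] at h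
  rw [hsymm] at h
  field_simp at h
  linear_combination h

lemma extractG (hn2 : ((n:ℝ)-2) ≠ 0) {i j k m : Fin l}
    (h : mobiusS n l A i j k m = mobiusS n l (diagonal d) i j k m)
    (hij : i ≠ j) (hik : i ≠ k) (him : i ≠ m) (hjk : j ≠ k) (hjm : j ≠ m) (hkm : k ≠ m) :
    A i k * A j m = A i m * A j k := by
  rw [mobiusS_eq, mobiusS_eq, Matrix.diagonal_mul_diagonal] at h
  rw [if_neg hik, if_neg hik, if_neg hjm, if_neg hjm, if_neg him, if_neg him,
    if_neg hjk, if_neg hjk, Matrix.diagonal_apply_ne _ hik, Matrix.diagonal_apply_ne _ hjm,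
    Matrix.diagonal_apply_ne _ him, Matrix.diagonal_apply_ne _ hjk] at h
  linarith [h]

lemma extractH (hn2 : ((n:ℝ)-2) ≠ 0) (hA : Aᵀ = A) {i j : Fin l}
    (h : mobiusS n l A i j i j = mobiusS n l (diagonal d) i j i j)
    (hij : i ≠ j) :
    ((n:ℝ) - 2) * (A i i * A j j - A i j ^ 2) + ((A*A) i i + (A*A) j j)
      = ((n:ℝ) - 2) * (d i * d j) + (d i ^ 2 + d j ^ 2) := by
  have hsymm : A j i = A i j := by
    conv_rhs => rw [← hA]
    rfl
  rw [mobiusS_eq, mobiusS_eq, Matrix.diagonal_mul_diagonal] at h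
  rw [if_pos rfl, if_pos rfl, if_pos rfl, if_pos rfl, if_neg hij, if_neg hij,
    if_neg (Ne.symm hij), if_neg (Ne.symm hij), Matrix.diagonal_apply_eq,
    Matrix.diagonal_apply_eq, Matrix.diagonal_apply_ne _ hij, Matrix.diagonal_apply_eq,
    Matrix.diagonal_apply_eq] at h
  rw [hsymm] at h
  field_simp at h
  linear_combination h

/-- Lemma 6.2: if symmetric bilinear forms `B`, `B̄` on an `l`-dimensional
space (`3 ≤ l ≤ n`, `n ≥ 4`) have equal associated tensors, then in some
orthonormal basis `B̄` is diagonal while some off-diagonal entry of `B`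
vanishes. -/
theorem stmt1 (n l : ℕ) (hn : 4 ≤ n) (hl : 3 ≤ l) (hln : l ≤ n)
    (B Bb : Matrix (Fin l) (Fin l) ℝ) (hB : B.IsSymm) (hBb : Bb.IsSymm)
    (hS : ∀ i j k m, mobiusS n l B i j k m = mobiusS n l Bb i j k m) :
    ∃ P : Matrix (Fin l) (Fin l) ℝ, Pᵀ * P = 1 ∧ (P * Bb * Pᵀ).IsDiag ∧
      ∃ i j : Fin l, i ≠ j ∧ (P * B * Pᵀ) i j = 0 := by
  have hn2 : ((n:ℝ) - 2) ≠ 0 := by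
    have : (4:ℝ) ≤ (n:ℝ) := by exact_mod_cast hn
    intro h; linarith
  have hBbH : Bb.IsHermitian := by
    rw [Matrix.IsHermitian, Matrix.conjTranspose_eq_transpose_of_trivial]
    exact hBb
  set U : Matrix (Fin l) (Fin l) ℝ := (hBbH.eigenvectorUnitary : Matrix (Fin l) (Fin l) ℝ)
    with hU
  set d : Fin l → ℝ := hBbH.eigenvalues with hd
  set P0 : Matrix (Fin l) (Fin l) ℝ := Uᵀ with hP0def
  have hstarU : star U = Uᵀ := by
    rw [Matrix.star_eq_conjTranspose, Matrix.conjTranspose_eq_transpose_of_trivial]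
  have hP0 : P0ᵀ * P0 = 1 := by
    rw [hP0def, Matrix.transpose_transpose, ← hstarU]
    exact Matrix.mem_unitaryGroup_iff.mp hBbH.eigenvectorUnitary.2
  have hdiagform : P0 * Bb * P0ᵀ = diagonal d := by
    rw [hP0def, Matrix.transpose_transpose, ← hstarU]
    have := hBbH.conjStarAlgAut_star_eigenvectorUnitary
    simp only [Unitary.conjStarAlgAut_star_apply, Unitary.coe_star] at this
    rw [this]
    congr 1
  have hAT : (P0 * B * P0ᵀ)ᵀ = P0 * B * P0ᵀ := by
    rw [Matrix.transpose_mul, Matrix.transpose_mul, Matrix.transpose_transpose, hB.eq,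
      Matrix.mul_assoc]
  by_cases hinj : Function.Injective d
  · refine ⟨P0, hP0, by rw [hdiagform]; exact Matrix.isDiag_diagonal _, ?_⟩
    by_contra hno
    push_neg at hno
    have hSA : ∀ i j k m, mobiusS n l (P0 * B * P0ᵀ) i j k m
        = mobiusS n l (diagonal d) i j k m := by
      intro i j k m
      rw [← hdiagform, mobius_conj n P0 B hP0, mobius_conj n P0 Bb hP0]
      exact Finset.sum_congr rfl fun a _ => Finset.sum_congr rfl fun b _ =>
        Finset.sum_congr rfl fun c _ => Finset.sum_congr rfl fun dd _ => by rw [hS a b c dd]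
    refine core n hn hl (P0 * B * P0ᵀ) hAT d
      (fun i j m hij him hjm => extractE n _ d hn2 hAT (hSA i j i m) hij him hjm)
      (fun _ i j k m hij hik him hjk hjm hkm =>
        extractG n _ d hn2 (hSA i j k m) hij hik him hjk hjm hkm)
      (fun i j hij => extractH n _ d hn2 hAT (hSA i j i j) hij)
      hno hinj
  · rw [Function.not_injective_iff] at hinj
    obtain ⟨a, b, hdab, hab⟩ := hinj
    obtain ⟨R, hR1, hR2, hR3⟩ := jacobi (P0 * B * P0ᵀ) (diagonal d) hAT
      (Matrix.isDiag_diagonal d) a b hab (by simp [hdab])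
    refine ⟨R * P0, ?_, ?_, a, b, hab, ?_⟩
    · rw [Matrix.transpose_mul, Matrix.mul_assoc P0ᵀ, ← Matrix.mul_assoc Rᵀ R P0, hR1,
        Matrix.one_mul, hP0]
    · have : R * P0 * Bb * (R * P0)ᵀ = R * (P0 * Bb * P0ᵀ) * Rᵀ := by
        rw [Matrix.transpose_mul]
        simp only [Matrix.mul_assoc]
      rw [this, hdiagform, hR2]
      exact Matrix.isDiag_diagonal d
    · have : R * P0 * B * (R * P0)ᵀ = R * (P0 * B * P0ᵀ) * Rᵀ := by
        rw [Matrix.transpose_mul]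
        simp only [Matrix.mul_assoc]
      rw [this]
      exact hR3
end extract
end

section
/- Under the hypotheses of the previous lemma (S = S̄, dim V = l with 3 ≤ l ≤ n, n ≥ 4), suppose an orthonormal basis is chosen with B̄ diagonal and B_ij = 0 for some i ≠ j. Then there exists a new orthonormal basis of V in which B̄ is still diagonal and B has semi-diagonal form: all off-diagonal entries of B in the last row and last column vanish, i.e. B_il = B_li = 0 for all i < l. -/
open Matrix BigOperators

variable {l : ℕ}

lemma sum_diag_mul {Bb : Matrix (Fin l) (Fin l) ℝ} (hdiag : Bb.IsDiag) {j m : Fin l}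
    (hjm : j ≠ m) : ∑ r, Bb j r * Bb r m = 0 := by
  apply Finset.sum_eq_zero
  intro r _
  rcases eq_or_ne j r with rfl | h
  · rw [hdiag hjm, mul_zero]
  · rw [hdiag h, zero_mul]

lemma sum_diag_sq {Bb : Matrix (Fin l) (Fin l) ℝ} (hdiag : Bb.IsDiag) (j : Fin l) :
    ∑ r, Bb j r * Bb r j = Bb j j * Bb j j := by
  rw [Finset.sum_eq_single j]
  · intro r _ hr
    rw [hdiag (Ne.symm hr), zero_mul]
  · simp

section extract
variable {n : ℕ} {B Bb : Matrix (Fin l) (Fin l) ℝ}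
  (hS : ∀ i j k m, mobiusS n l B i j k m = mobiusS n l Bb i j k m)
  (hdiag : Bb.IsDiag)

include hS hdiag in
lemma extractF1 {i j m : Fin l} (hij : i ≠ j) (him : i ≠ m) (hjm : j ≠ m) :
    B i i * B j m - B i m * B j i + (1 / ((n : ℝ) - 2)) * ∑ r, B j r * B r m = 0 := by
  have h := hS i j i m
  simp only [mobiusS, eq_self_iff_true, if_true, if_neg hjm, if_neg him, if_neg hij.symm,
    one_mul, zero_mul, add_zero, sub_zero, zero_sub, neg_zero] at h
  rw [h, sum_diag_mul hdiag hjm, hdiag hjm, hdiag (show (j:Fin l) ≠ i from hij.symm)]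
  ring

include hS hdiag in
lemma extractF2 {i j k m : Fin l} (hij : i ≠ j) (hik : i ≠ k) (him : i ≠ m)
    (hjk : j ≠ k) (hjm : j ≠ m) (hkm : k ≠ m) :
    B i k * B j m - B i m * B j k = 0 := by
  have h := hS i j k m
  simp only [mobiusS, if_neg hik, if_neg hjm, if_neg him, if_neg hjk,
    zero_mul, add_zero, sub_zero, zero_sub, neg_zero, zero_add, Finset.sum_const_zero, mul_zero] at h
  rw [h, hdiag hik, hdiag hjm, hdiag him, hdiag hjk]
  ring

include hS hdiag in
lemma extractF4 {i j : Fin l} (hij : i ≠ j) :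
    B i i * B j j - B i j * B j i
      + (1 / ((n : ℝ) - 2)) * (∑ r, B j r * B r j + ∑ r, B i r * B r i)
    = Bb i i * Bb j j + (1 / ((n : ℝ) - 2)) * (Bb j j * Bb j j + Bb i i * Bb i i) := by
  have h := hS i j i j
  simp only [mobiusS, eq_self_iff_true, if_true, if_neg hij, if_neg hij.symm,
    one_mul, zero_mul, add_zero, sub_zero, zero_sub, neg_zero] at h
  rw [Finset.sum_add_distrib] at h
  rw [h, Finset.sum_add_distrib, sum_diag_sq hdiag, sum_diag_sq hdiag, hdiag hij, hdiag hij.symm]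
  ring
end extract
lemma sum_erase_two (f : Fin l → ℝ) {j m : Fin l} (h : j ≠ m) :
    ∑ i ∈ (Finset.univ.erase j).erase m, f i = (∑ i, f i) - f j - f m := by
  rw [Finset.sum_erase_eq_sub (Finset.mem_erase.2 ⟨h.symm, Finset.mem_univ m⟩),
    Finset.sum_erase_eq_sub (Finset.mem_univ j)]

lemma card_erase_two {j m : Fin l} (h : j ≠ m) :
    ((Finset.univ.erase j).erase m).card = l - 2 := by
  rw [Finset.card_erase_of_mem (Finset.mem_erase.2 ⟨h.symm, Finset.mem_univ m⟩),
    Finset.card_erase_of_mem (Finset.mem_univ j)]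
  simp [Finset.card_univ]
  omega

section extract
variable {n : ℕ} {B : Matrix (Fin l) (Fin l) ℝ}

lemma extractF3 (hl : 3 ≤ l)
    (hF1 : ∀ i j m : Fin l, i ≠ j → i ≠ m → j ≠ m →
      B i i * B j m - B i m * B j i + (1 / ((n : ℝ) - 2)) * ∑ r, B j r * B r m = 0)
    {j m : Fin l} (hjm : j ≠ m) :
    (∑ i, B i i) * B j m - (∑ r, B j r * B r m)
      + ((l : ℝ) - 2) * ((1 / ((n : ℝ) - 2)) * ∑ r, B j r * B r m) = 0 := by
  set S := (Finset.univ.erase j).erase m with hS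
  have hsum : ∑ i ∈ S, (B i i * B j m - B i m * B j i
      + (1 / ((n : ℝ) - 2)) * ∑ r, B j r * B r m) = 0 := by
    apply Finset.sum_eq_zero
    intro i hi
    obtain ⟨him, hi2⟩ := Finset.mem_erase.1 hi
    obtain ⟨hij, -⟩ := Finset.mem_erase.1 hi2
    exact hF1 i j m hij him hjm
  rw [Finset.sum_add_distrib, Finset.sum_sub_distrib, Finset.sum_const,
    card_erase_two hjm, ← Finset.sum_mul, sum_erase_two (fun i => B i i) hjm,
    sum_erase_two (fun i => B i m * B j i) hjm] at hsum
  have hcomm : ∑ i, B i m * B j i = ∑ r, B j r * B r m :=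
    Finset.sum_congr rfl (fun r _ => mul_comm _ _)
  rw [hcomm] at hsum
  have hcard : ((l - 2 : ℕ) : ℝ) = (l : ℝ) - 2 := by
    have : (2:ℕ) ≤ l := by omega
    push_cast [Nat.cast_sub this]
    ring
  rw [nsmul_eq_mul, hcard] at hsum
  linarith [hsum]
end extract
lemma col_case (hl : 3 ≤ l) (B Bb : Matrix (Fin l) (Fin l) ℝ) (hdiag : Bb.IsDiag)
    (col : Fin l) (hcol : ∀ k, k ≠ col → B k col = 0) :
    ∃ (a b : Fin l) (v : Fin l → ℝ) (μ ν : ℝ), a ≠ b ∧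
      (∀ k, k ≠ a → k ≠ b → v k = 0) ∧ v ≠ 0 ∧ B *ᵥ v = μ • v ∧ Bb *ᵥ v = ν • v := by
  classical
  have h0l : 0 < l := by omega
  have h1l : 1 < l := by omega
  set z : Fin l := ⟨0, h0l⟩
  set o : Fin l := ⟨1, h1l⟩
  have hzo : z ≠ o := by simp [Fin.ext_iff]
  set b : Fin l := if col = z then o else z with hbdef
  have hbcol : col ≠ b := by
    by_cases h : col = z
    · rw [hbdef, if_pos h, h]; exact hzo
    · rw [hbdef, if_neg h]; exact h
  refine ⟨col, b, Pi.single col 1, B col col, Bb col col, hbcol, ?_, ?_, ?_, ?_⟩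
  · intro k hk _
    exact Pi.single_eq_of_ne hk 1
  · intro h
    have := congrFun h col
    simp at this
  · funext k
    simp only [Matrix.mulVec_single, Pi.smul_apply, smul_eq_mul]
    show B k col * 1 = B col col * (Pi.single col (1:ℝ) : Fin l → ℝ) k
    by_cases hk : k = col
    · rw [hk, Pi.single_eq_same, mul_one]
    · rw [hcol k hk, Pi.single_eq_of_ne hk, mul_zero, zero_mul]
  · funext k
    simp only [Matrix.mulVec_single, Pi.smul_apply, smul_eq_mul]
    show Bb k col * 1 = Bb col col * (Pi.single col (1:ℝ) : Fin l → ℝ) k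
    by_cases hk : k = col
    · rw [hk, Pi.single_eq_same, mul_one]
    · rw [hdiag hk, Pi.single_eq_of_ne hk, mul_zero, zero_mul]

lemma diag_mulVec {Bb : Matrix (Fin l) (Fin l) ℝ} (hdiag : Bb.IsDiag) (w : Fin l → ℝ)
    (k : Fin l) : Bb.mulVec w k = Bb k k * w k := by
  have h0 : Bb.mulVec w k = ∑ r, Bb k r * w r := by
    simp [Matrix.mulVec, dotProduct]
  rw [h0, Finset.sum_eq_single k]
  · intro r _ hr
    rw [hdiag (Ne.symm hr), zero_mul]
  · simp

lemma mulVec_two (M : Matrix (Fin l) (Fin l) ℝ) (a b : Fin l) (c₁ c₂ : ℝ) (k : Fin l) :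
    (M *ᵥ (c₁ • (Pi.single a 1 : Fin l → ℝ) + c₂ • (Pi.single b 1 : Fin l → ℝ))) k = c₁ * M k a + c₂ * M k b := by
  rw [Matrix.mulVec_add, Matrix.mulVec_smul, Matrix.mulVec_smul, Matrix.mulVec_single,
    Matrix.mulVec_single]
  simp

lemma key (n : ℕ) (hn : 4 ≤ n) (hl : 3 ≤ l) (hln : l ≤ n)
    (B Bb : Matrix (Fin l) (Fin l) ℝ) (hB : B.IsSymm) (hdiag : Bb.IsDiag)
    (hS : ∀ i j k m, mobiusS n l B i j k m = mobiusS n l Bb i j k m)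
    (p q : Fin l) (hpq : p ≠ q) (hBpq : B p q = 0) :
    ∃ (a b : Fin l) (v : Fin l → ℝ) (μ ν : ℝ), a ≠ b ∧
      (∀ k, k ≠ a → k ≠ b → v k = 0) ∧ v ≠ 0 ∧ B *ᵥ v = μ • v ∧ Bb *ᵥ v = ν • v := by
  classical
  have hs : ∀ i j, B i j = B j i := fun i j => hB.apply j i
  have hn2 : ((n : ℝ) - 2) ≠ 0 := by
    have : (4:ℝ) ≤ (n:ℝ) := by exact_mod_cast hn
    linarith
  have hmul : ((n:ℝ) - 2) * (1 / ((n:ℝ) - 2)) = 1 := mul_one_div_cancel hn2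
  have hBqp : B q p = 0 := by rw [hs q p]; exact hBpq
  -- denominator-free relations
  have G1 : ∀ i j m : Fin l, i ≠ j → i ≠ m → j ≠ m →
      ((n:ℝ) - 2) * (B i i * B j m - B i m * B j i) + (∑ r, B j r * B r m) = 0 := by
    intro i j m hij him hjm
    have h := extractF1 hS hdiag hij him hjm
    have h2 := congrArg (fun t => ((n:ℝ) - 2) * t) h
    simp only [mul_zero] at h2
    linear_combination h2 - (∑ r, B j r * B r m) * hmul
  have G2 : ∀ i j k m : Fin l, i ≠ j → i ≠ k → i ≠ m → j ≠ k → j ≠ m → k ≠ m →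
      B i k * B j m - B i m * B j k = 0 := fun i j k m h1 h2 h3 h4 h5 h6 =>
    extractF2 hS hdiag h1 h2 h3 h4 h5 h6
  have G4 : ∀ i j : Fin l, i ≠ j →
      ((n:ℝ) - 2) * (B i i * B j j - B i j * B j i)
        + (∑ r, B j r * B r j + ∑ r, B i r * B r i)
      = ((n:ℝ) - 2) * (Bb i i * Bb j j) + (Bb j j * Bb j j + Bb i i * Bb i i) := by
    intro i j hij
    have h := extractF4 hS hdiag hij
    have h2 := congrArg (fun t => ((n:ℝ) - 2) * t) h
    linear_combination h2 - (∑ r, B j r * B r j + ∑ r, B i r * B r i) * hmul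
      + (Bb j j * Bb j j + Bb i i * Bb i i) * hmul
  have G3 : ∀ j m : Fin l, j ≠ m →
      ((n:ℝ) - 2) * ((∑ i, B i i) * B j m - ∑ r, B j r * B r m)
        + ((l:ℝ) - 2) * ∑ r, B j r * B r m = 0 := by
    intro j m hjm
    have h := extractF3 hl (fun i j m a b c => extractF1 hS hdiag a b c) hjm
    have h2 := congrArg (fun t => ((n:ℝ) - 2) * t) h
    simp only [mul_zero] at h2
    linear_combination h2 - (((l:ℝ) - 2) * ∑ r, B j r * B r m) * hmul
  have h1 : ∀ i, i ≠ p → i ≠ q → ((n:ℝ) - 2) * (B i p * B i q) = ∑ r, B p r * B r q := by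
    intro i hip hiq
    have h := G1 i p q hip hiq hpq
    rw [hBpq] at h
    linear_combination -h - ((n:ℝ)-2) * B i q * hs p i
  by_cases hN : (∑ r, B p r * B r q) = 0
  · -- column case
    have h1' : ∀ i, i ≠ p → i ≠ q → B i p * B i q = 0 := by
      intro i hip hiq
      have h := h1 i hip hiq
      rw [hN] at h
      rcases mul_eq_zero.1 h with h' | h'
      · exact absurd h' hn2
      · exact h'
    by_cases hcolp : ∀ k, k ≠ p → B k p = 0
    · exact col_case hl B Bb hdiag p hcolp
    · push_neg at hcolp
      obtain ⟨r, hrp, hrp0⟩ := hcolp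
      have hrq : r ≠ q := by
        intro h
        rw [h] at hrp0
        exact hrp0 hBqp
      have hBrq : B r q = 0 := by
        rcases mul_eq_zero.1 (h1' r hrp hrq) with h' | h'
        · exact absurd h' hrp0
        · exact h'
      by_cases hcolq : ∀ k, k ≠ q → B k q = 0
      · exact col_case hl B Bb hdiag q hcolq
      · push_neg at hcolq
        obtain ⟨t, htq, htq0⟩ := hcolq
        have htp : t ≠ p := by
          intro h
          rw [h] at htq0
          exact htq0 hBpq
        have htr : t ≠ r := by
          intro h
          rw [h] at htq0
          exact htq0 hBrq
        have h := G2 r t p q (Ne.symm htr) hrp hrq htp htq hpq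
        exfalso
        rw [hBrq] at h
        have : B r p * B t q = 0 := by linear_combination h
        rcases mul_eq_zero.1 this with h' | h'
        · exact hrp0 h'
        · exact htq0 h'
  · -- eigenvector case : first, l = n
    have hleqn : l = n := by
      by_contra hne
      have hfact : (((l:ℝ)) - (n:ℝ)) * (∑ r, B p r * B r q) = 0 := by
        have h := G3 p q hpq
        rw [hBpq] at h
        linear_combination h
      rcases mul_eq_zero.1 hfact with h' | h'
      · have hlltn : l < n := lt_of_le_of_ne hln hne
        have : ((l:ℝ)) < (n:ℝ) := by exact_mod_cast hlltn
        linarith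
      · exact hN h'
    have hl4 : 4 ≤ l := by omega
    -- choose two indices outside {p, q}
    have hcard : 1 < (Finset.univ \ {p, q} : Finset (Fin l)).card := by
      rw [Finset.card_sdiff_of_subset (Finset.subset_univ _), Finset.card_univ, Fintype.card_fin,
        Finset.card_pair hpq]
      omega
    obtain ⟨i₀, hi₀mem, i', hi'mem, hii'⟩ := Finset.one_lt_card.mp hcard
    have hi₀ : i₀ ≠ p ∧ i₀ ≠ q := by
      rw [Finset.mem_sdiff] at hi₀mem
      have := hi₀mem.2
      simp at this
      exact this
    have hi' : i' ≠ p ∧ i' ≠ q := by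
      rw [Finset.mem_sdiff] at hi'mem
      have := hi'mem.2
      simp at this
      exact this
    obtain ⟨hi₀p, hi₀q⟩ := hi₀
    obtain ⟨hi'p, hi'q⟩ := hi'
    have hx : ∀ i, i ≠ p → i ≠ q → B i p ≠ 0 := by
      intro i hip hiq h0
      apply hN
      have h := h1 i hip hiq
      rw [h0] at h
      simpa using h.symm
    have hy : ∀ i, i ≠ p → i ≠ q → B i q ≠ 0 := by
      intro i hip hiq h0
      apply hN
      have h := h1 i hip hiq
      rw [h0] at h
      simpa using h.symm
    have h2 : ∀ i, i ≠ p → i ≠ q →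
        (∑ r, B p r * B r i) = -(((n:ℝ) - 2) * (B q q * B i p)) := by
      intro i hip hiq
      have h := G1 q p i hpq.symm (Ne.symm hiq) (Ne.symm hip)
      rw [hBpq] at h
      linear_combination h + ((n:ℝ)-2) * B q q * hs i p
    have h2' : ∀ i, i ≠ p → i ≠ q →
        (∑ r, B q r * B r i) = -(((n:ℝ) - 2) * (B p p * B i q)) := by
      intro i hip hiq
      have h := G1 p q i hpq (Ne.symm hip) (Ne.symm hiq)
      rw [hBqp] at h
      linear_combination h + ((n:ℝ)-2) * B p p * hs i q
    have h3 : ∀ k i, k ≠ p → k ≠ q → i ≠ p → i ≠ q → k ≠ i →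
        B k i * B k p = (B k k - B q q) * B i p := by
      intro k i hkp hkq hip hiq hki
      have hG := G1 k p i hkp hki (Ne.symm hip)
      have hpre : ((n:ℝ)-2) * (B k i * B k p) = ((n:ℝ)-2) * ((B k k - B q q) * B i p) := by
        linear_combination -hG + h2 i hip hiq + ((n:ℝ)-2) * B k k * hs p i + ((n:ℝ)-2) * B k i * hs k p
      exact mul_left_cancel₀ hn2 hpre
    have h3' : ∀ k i, k ≠ p → k ≠ q → i ≠ p → i ≠ q → k ≠ i →
        B k i * B k q = (B k k - B p p) * B i q := by
      intro k i hkp hkq hip hiq hki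
      have hG := G1 k q i hkq hki (Ne.symm hiq)
      have hpre : ((n:ℝ)-2) * (B k i * B k q) = ((n:ℝ)-2) * ((B k k - B p p) * B i q) := by
        linear_combination -hG + h2' i hip hiq + ((n:ℝ)-2) * B k k * hs q i + ((n:ℝ)-2) * B k i * hs k q
      exact mul_left_cancel₀ hn2 hpre
    have A3 : ∀ i j, i ≠ p → i ≠ q → j ≠ p → j ≠ q → i ≠ j →
        B i p * B j q = B i q * B j p := by
      intro i j hip hiq hjp hjq hij
      have h := G2 i j p q hij hip hiq hjp hjq hpq
      linear_combination h
    have h4 : B p p = B q q := by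
      have hA1 := h3 i₀ i' hi₀p hi₀q hi'p hi'q hii'
      have hA2 := h3' i₀ i' hi₀p hi₀q hi'p hi'q hii'
      have hA3 := A3 i' i₀ hi'p hi'q hi₀p hi₀q (Ne.symm hii')
      have hkey : (B p p - B q q) * (B i' p * B i₀ q) = 0 := by
        linear_combination -(B i₀ q) * hA1 + (B i₀ p) * hA2 - (B i₀ i₀ - B p p) * hA3
      rcases mul_eq_zero.1 hkey with h' | h'
      · linarith [h']
      · exact absurd h' (mul_ne_zero (hx i' hi'p hi'q) (hy i₀ hi₀p hi₀q))
    have h5 : B i' p * B i₀ p = B i' q * B i₀ q := by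
      have hGp := G1 p i₀ i' (Ne.symm hi₀p) (Ne.symm hi'p) hii'
      have hGq := G1 q i₀ i' (Ne.symm hi₀q) (Ne.symm hi'q) hii'
      have hpre : ((n:ℝ)-2) * (B i' p * B i₀ p) = ((n:ℝ)-2) * (B i' q * B i₀ q) := by
        linear_combination -hGp + hGq + ((n:ℝ)-2) * B i₀ i' * h4
          + ((n:ℝ)-2) * B i₀ p * hs i' p - ((n:ℝ)-2) * B i₀ q * hs i' q
      exact mul_left_cancel₀ hn2 hpre
    have hA3' := A3 i' i₀ hi'p hi'q hi₀p hi₀q (Ne.symm hii')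
    have hsq : B i₀ p * B i₀ p = B i₀ q * B i₀ q := by
      have hkey2 : B i' q * (B i₀ p * B i₀ p - B i₀ q * B i₀ q) = 0 := by
        linear_combination (-(B i₀ p)) * hA3' + (B i₀ q) * h5
      rcases mul_eq_zero.1 hkey2 with h' | h'
      · exact absurd h' (hy i' hi'p hi'q)
      · linarith [h']
    obtain ⟨ε, hε2, hε₀⟩ : ∃ ε : ℝ, ε * ε = 1 ∧ B i₀ q = ε * B i₀ p := by
      have hfac : (B i₀ q - B i₀ p) * (B i₀ q + B i₀ p) = 0 := by linear_combination -hsq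
      rcases mul_eq_zero.1 hfac with h' | h'
      · exact ⟨1, by norm_num, by linear_combination h'⟩
      · exact ⟨-1, by norm_num, by linear_combination h'⟩
    have hεall : ∀ i, i ≠ p → i ≠ q → B i q = ε * B i p := by
      intro i hip hiq
      by_cases hii₀ : i = i₀
      · rw [hii₀]; exact hε₀
      · have hA := A3 i i₀ hip hiq hi₀p hi₀q hii₀
        have hfin : B i q * B i₀ p = (ε * B i p) * B i₀ p := by
          linear_combination -hA + B i p * hε₀
        exact mul_right_cancel₀ (hx i₀ hi₀p hi₀q) hfin
    have h6 : ∑ r, B p r * B r p = ∑ r, B q r * B r q := by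
      apply Fintype.sum_equiv (Equiv.swap p q)
      intro r
      by_cases hrp : r = p
      · rw [hrp, Equiv.swap_apply_left]
        linear_combination (B p p + B q q) * h4
      · by_cases hrq : r = q
        · rw [hrq, Equiv.swap_apply_right]
          ring
        · rw [Equiv.swap_apply_of_ne_of_ne hrp hrq]
          linear_combination B r p * hs p r - B r q * hs q r
            - (B r q + ε * B r p) * hεall r hrp hrq - (B r p * B r p) * hε2
    have h7 : ∀ j, j ≠ p → j ≠ q →
        (Bb p p - Bb q q) * (((n:ℝ)-2) * Bb j j + Bb p p + Bb q q) = 0 := by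
      intro j hjp hjq
      have hG4p := G4 p j (Ne.symm hjp)
      have hG4q := G4 q j (Ne.symm hjq)
      have hxy2 : B p j * B j p = B q j * B j q := by
        linear_combination B j p * hs p j - B j q * hs q j
          - (B j q + ε * B j p) * hεall j hjp hjq - (B j p * B j p) * hε2
      linear_combination hG4q - hG4p + ((n:ℝ)-2) * B j j * h4 + h6 - ((n:ℝ)-2) * hxy2
    by_cases hβ : Bb p p = Bb q q
    · refine ⟨p, q, (1:ℝ) • (Pi.single p 1 : Fin l → ℝ) + (-ε) • (Pi.single q 1 : Fin l → ℝ),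
        B p p, Bb p p, hpq, ?_, ?_, ?_, ?_⟩
      · intro k hkp hkq
        simp [Pi.single_eq_of_ne hkp, Pi.single_eq_of_ne hkq]
      · intro h
        have h2 := congrFun h p
        simp [Pi.single_eq_of_ne hpq] at h2
      · funext k
        rw [mulVec_two]
        simp only [Pi.smul_apply, Pi.add_apply, smul_eq_mul]
        by_cases hkp : k = p
        · rw [hkp, Pi.single_eq_same, Pi.single_eq_of_ne hpq]
          linear_combination -ε * hBpq
        · by_cases hkq : k = q
          · rw [hkq, Pi.single_eq_same, Pi.single_eq_of_ne hpq.symm]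
            linear_combination hBqp + ε * h4
          · rw [Pi.single_eq_of_ne hkp, Pi.single_eq_of_ne hkq]
            linear_combination -ε * hεall k hkp hkq - B k p * hε2
      · funext k
        rw [diag_mulVec hdiag]
        simp only [Pi.smul_apply, Pi.add_apply, smul_eq_mul]
        by_cases hkp : k = p
        · rw [hkp]
        · by_cases hkq : k = q
          · rw [hkq, Pi.single_eq_same, Pi.single_eq_of_ne hpq.symm]
            linear_combination (-ε) * hβ.symm
          · rw [Pi.single_eq_of_ne hkp, Pi.single_eq_of_ne hkq]
            ring
    · have hb0 := h7 i₀ hi₀p hi₀q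
      have hb1 := h7 i' hi'p hi'q
      have hββ : Bb i₀ i₀ = Bb i' i' := by
        have h0 : ((n:ℝ)-2) * Bb i₀ i₀ + Bb p p + Bb q q = 0 := by
          rcases mul_eq_zero.1 hb0 with h | h
          · exact absurd (sub_eq_zero.mp h) hβ
          · exact h
        have h0' : ((n:ℝ)-2) * Bb i' i' + Bb p p + Bb q q = 0 := by
          rcases mul_eq_zero.1 hb1 with h | h
          · exact absurd (sub_eq_zero.mp h) hβ
          · exact h
        have hpre : ((n:ℝ)-2) * Bb i₀ i₀ = ((n:ℝ)-2) * Bb i' i' := by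
          linear_combination h0 - h0'
        exact mul_left_cancel₀ hn2 hpre
      refine ⟨i₀, i', (B i' p) • (Pi.single i₀ 1 : Fin l → ℝ)
          + (-(B i₀ p)) • (Pi.single i' 1 : Fin l → ℝ), B q q, Bb i₀ i₀, hii', ?_, ?_, ?_, ?_⟩
      · intro k hk0 hk1
        simp [Pi.single_eq_of_ne hk0, Pi.single_eq_of_ne hk1]
      · intro h
        have h2 := congrFun h i₀
        simp [Pi.single_eq_of_ne hii'] at h2
        exact hx i' hi'p hi'q h2
      · funext k
        rw [mulVec_two]
        simp only [Pi.smul_apply, Pi.add_apply, smul_eq_mul]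
        by_cases hk0 : k = i₀
        · rw [hk0, Pi.single_eq_same, Pi.single_eq_of_ne hii']
          linear_combination -(h3 i₀ i' hi₀p hi₀q hi'p hi'q hii')
        · by_cases hk1 : k = i'
          · rw [hk1, Pi.single_eq_same, Pi.single_eq_of_ne hii'.symm]
            linear_combination h3 i' i₀ hi'p hi'q hi₀p hi₀q hii'.symm
          · rw [Pi.single_eq_of_ne hk0, Pi.single_eq_of_ne hk1]
            by_cases hkp : k = p
            · rw [hkp]
              linear_combination B i' p * hs p i₀ - B i₀ p * hs p i'
            · by_cases hkq : k = q
              · rw [hkq]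
                linear_combination B i' p * hs q i₀ - B i₀ p * hs q i'
                  + B i' p * hεall i₀ hi₀p hi₀q - B i₀ p * hεall i' hi'p hi'q
              · have hm : (B i' p * B k i₀ + -(B i₀ p) * B k i') * B k p = 0 := by
                  linear_combination B i' p * h3 k i₀ hkp hkq hi₀p hi₀q hk0
                    - B i₀ p * h3 k i' hkp hkq hi'p hi'q hk1
                rcases mul_eq_zero.1 hm with h' | h'
                · rw [mul_zero]
                  linear_combination h'
                · exact absurd h' (hx k hkp hkq)
      · funext k
        rw [diag_mulVec hdiag]
        simp only [Pi.smul_apply, Pi.add_apply, smul_eq_mul]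
        by_cases hk0 : k = i₀
        · rw [hk0]
        · by_cases hk1 : k = i'
          · rw [hk1, Pi.single_eq_same, Pi.single_eq_of_ne hii'.symm]
            linear_combination -(B i₀ p) * hββ.symm
          · rw [Pi.single_eq_of_ne hk0, Pi.single_eq_of_ne hk1]
            ring

lemma conj_apply (Q M : Matrix (Fin l) (Fin l) ℝ) (i j : Fin l) :
    (Q * M * Qᵀ) i j = Q i ⬝ᵥ M.mulVec (Q j) := by
  rw [Matrix.mul_assoc]
  simp only [Matrix.mul_apply, Matrix.mulVec, dotProduct, Matrix.transpose_apply]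

lemma construct (hl : 3 ≤ l) (B Bb : Matrix (Fin l) (Fin l) ℝ) (hB : B.IsSymm)
    (hdiag : Bb.IsDiag) (a b : Fin l) (hab : a ≠ b) (v : Fin l → ℝ)
    (hsupp : ∀ k, k ≠ a → k ≠ b → v k = 0) (hv0 : v ≠ 0)
    (μ ν : ℝ) (hμ : B.mulVec v = μ • v) (hν : Bb.mulVec v = ν • v) :
    ∃ P : Matrix (Fin l) (Fin l) ℝ, Pᵀ * P = 1 ∧ (P * Bb * Pᵀ).IsDiag ∧
      ∀ i : Fin l, (i : ℕ) < l - 1 →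
        (P * B * Pᵀ) i ⟨l - 1, by omega⟩ = 0 ∧ (P * B * Pᵀ) ⟨l - 1, by omega⟩ i = 0 := by
  classical
  -- basic positivity
  have hab' : b ≠ a := hab.symm
  have hvab : v a ≠ 0 ∨ v b ≠ 0 := by
    by_contra h
    push_neg at h
    apply hv0
    funext k
    by_cases hka : k = a
    · subst hka; exact h.1
    · by_cases hkb : k = b
      · subst hkb; exact h.2
      · exact hsupp k hka hkb
  have hr2 : 0 < v a ^ 2 + v b ^ 2 := by
    rcases hvab with h | h <;> positivity
  set r : ℝ := Real.sqrt (v a ^ 2 + v b ^ 2) with hrdef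
  have hr : 0 < r := Real.sqrt_pos.2 hr2
  have hrne : r ≠ 0 := ne_of_gt hr
  have hrsq : r ^ 2 = v a ^ 2 + v b ^ 2 := Real.sq_sqrt (le_of_lt hr2)
  set c : ℝ := v a / r with hcdef
  set s : ℝ := v b / r with hsdef
  have hcs : c * c + s * s = 1 := by
    rw [hcdef, hsdef]
    field_simp
    nlinarith [hrsq]
  -- rows
  set sa : Fin l → ℝ := Pi.single a 1 with hsadef
  set sb : Fin l → ℝ := Pi.single b 1 with hsbdef
  set u : Fin l → Fin l → ℝ := fun i =>
    if i = a then c • sa + s • sb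
    else if i = b then (-s) • sa + c • sb
    else Pi.single i 1 with hudef
  have hdot2 : ∀ α β γ δ : ℝ, (α • sa + β • sb) ⬝ᵥ (γ • sa + δ • sb) = α * γ + β * δ := by
    intro α β γ δ
    simp [hsadef, hsbdef, dotProduct_add, add_dotProduct,
      smul_dotProduct, dotProduct_smul, single_dotProduct,
      dotProduct_single, Pi.single_apply, hab, hab', mul_comm]
  have hdotk : ∀ (k : Fin l) (α β : ℝ), k ≠ a → k ≠ b →
      (Pi.single k (1:ℝ)) ⬝ᵥ (α • sa + β • sb) = 0 := by
    intro k α β hka hkb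
    simp [hsadef, hsbdef, dotProduct_add, dotProduct_smul,
      single_dotProduct, Pi.single_apply, hka, hkb]
  have hdotk' : ∀ (k : Fin l) (α β : ℝ), k ≠ a → k ≠ b →
      (α • sa + β • sb) ⬝ᵥ (Pi.single k (1:ℝ)) = 0 := by
    intro k α β hka hkb
    simp [hsadef, hsbdef, add_dotProduct, smul_dotProduct,
      dotProduct_single, Pi.single_apply, hka.symm, hkb.symm, Ne.symm hka, Ne.symm hkb]
  have hui_a : u a = c • sa + s • sb := by simp [hudef]
  have hui_b : u b = (-s) • sa + c • sb := by simp [hudef, hab']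
  have hui_o : ∀ i, i ≠ a → i ≠ b → u i = Pi.single i 1 := by
    intro i hia hib; simp [hudef, hia, hib]
  have honu : ∀ i j, u i ⬝ᵥ u j = if i = j then 1 else 0 := by
    intro i j
    by_cases hia : i = a
    · by_cases hja : j = a
      · rw [hia, hja, hui_a, hdot2, if_pos rfl]; linarith [hcs]
      · by_cases hjb : j = b
        · rw [hia, hjb, hui_a, hui_b, hdot2, if_neg hab]
          ring
        · rw [hia, hui_a, hui_o j hja hjb, hdotk' j c s hja hjb,
            if_neg (fun h => hja h.symm)]
    · by_cases hib : i = b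
      · by_cases hja : j = a
        · rw [hib, hja, hui_b, hui_a, hdot2, if_neg hab']
          ring
        · by_cases hjb : j = b
          · rw [hib, hjb, hui_b, hdot2, if_pos rfl]; linarith [hcs]
          · rw [hib, hui_b, hui_o j hja hjb, hdotk' j (-s) c hja hjb,
              if_neg (fun h => hjb h.symm)]
      · by_cases hja : j = a
        · rw [hja, hui_a, hui_o i hia hib, hdotk i c s hia hib,
            if_neg hia]
        · by_cases hjb : j = b
          · rw [hjb, hui_b, hui_o i hia hib, hdotk i (-s) c hia hib,
              if_neg hib]
          · rw [hui_o i hia hib, hui_o j hja hjb]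
            simp [single_dotProduct, Pi.single_apply, eq_comm]
  -- u a is proportional to v
  have hua_v : u a = r⁻¹ • v := by
    rw [hui_a]
    funext k
    by_cases hka : k = a
    · rw [hka]
      simp [hsadef, hsbdef, Pi.single_apply, hab']
      rw [hcdef]; field_simp
    · by_cases hkb : k = b
      · rw [hkb]
        simp [hsadef, hsbdef, Pi.single_apply, hab]
        rw [hsdef]; field_simp
      · simp [hsadef, hsbdef, Pi.single_apply, hka, hkb, hsupp k hka hkb]
  have hBua : B.mulVec (u a) = μ • u a := by
    rw [hua_v, Matrix.mulVec_smul, hμ, smul_comm]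
  have hνa : Bb a a * v a = ν * v a := by
    have h := congrFun hν a
    rwa [diag_mulVec hdiag, Pi.smul_apply, smul_eq_mul] at h
  have hνb : Bb b b * v b = ν * v b := by
    have h := congrFun hν b
    rwa [diag_mulVec hdiag, Pi.smul_apply, smul_eq_mul] at h
  have hBbua : Bb.mulVec (u a) = ν • u a := by
    rw [hua_v, Matrix.mulVec_smul, hν, smul_comm]
  -- eigenvalue for u b
  obtain ⟨κ, hκ⟩ : ∃ κ, Bb.mulVec (u b) = κ • u b := by
    by_cases hvb : v b = 0
    · refine ⟨Bb b b, funext fun k => ?_⟩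
      rw [diag_mulVec hdiag, Pi.smul_apply, smul_eq_mul, hui_b]
      have hs0 : s = 0 := by rw [hsdef, hvb]; simp
      by_cases hka : k = a
      · rw [hka]; simp [hsadef, hsbdef, Pi.single_apply, hab', hs0]
      · by_cases hkb : k = b
        · rw [hkb]
        · simp [hsadef, hsbdef, Pi.single_apply, hka, hkb]
    · by_cases hva : v a = 0
      · refine ⟨Bb a a, funext fun k => ?_⟩
        rw [diag_mulVec hdiag, Pi.smul_apply, smul_eq_mul, hui_b]
        have hc0 : c = 0 := by rw [hcdef, hva]; simp
        by_cases hka : k = a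
        · rw [hka]
        · by_cases hkb : k = b
          · rw [hkb]; simp [hsadef, hsbdef, Pi.single_apply, hab, hc0]
          · simp [hsadef, hsbdef, Pi.single_apply, hka, hkb]
      · have hBa : Bb a a = ν := mul_right_cancel₀ hva hνa
        have hBb2 : Bb b b = ν := mul_right_cancel₀ hvb hνb
        refine ⟨ν, funext fun k => ?_⟩
        rw [diag_mulVec hdiag, Pi.smul_apply, smul_eq_mul, hui_b]
        by_cases hka : k = a
        · rw [hka]; simp [hsadef, hsbdef, Pi.single_apply, hab', hBa]
        · by_cases hkb : k = b
          · rw [hkb]; simp [hsadef, hsbdef, Pi.single_apply, hab, hBb2]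
          · simp [hsadef, hsbdef, Pi.single_apply, hka, hkb]
  have hBbuo : ∀ j, j ≠ a → j ≠ b → Bb.mulVec (u j) = Bb j j • u j := by
    intro j hja hjb
    rw [hui_o j hja hjb]
    funext k
    rw [diag_mulVec hdiag, Pi.smul_apply, smul_eq_mul]
    by_cases hkj : k = j
    · rw [hkj]
    · simp [Pi.single_apply, hkj]
  set lam : Fin l → ℝ := fun j => if j = a then ν else if j = b then κ else Bb j j with hlamdef
  have hlam : ∀ j, Bb.mulVec (u j) = lam j • u j := by
    intro j
    by_cases hja : j = a
    · rw [hja]; simpa [hlamdef] using hBbua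
    · by_cases hjb : j = b
      · rw [hjb]; simpa [hlamdef, hab'] using hκ
      · rw [hlamdef]; simp only [if_neg hja, if_neg hjb]
        exact hBbuo j hja hjb
  -- the rotation matrix
  set Q : Matrix (Fin l) (Fin l) ℝ := Matrix.of u with hQdef
  have hQrow : ∀ i, Q i = u i := fun i => rfl
  have hQQ : Q * Qᵀ = 1 := by
    ext i j
    rw [Matrix.mul_apply, Matrix.one_apply]
    have : ∑ k, Q i k * Qᵀ k j = u i ⬝ᵥ u j := by
      simp [Matrix.transpose_apply, dotProduct, hQrow]
    rw [this, honu]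
  have hQtQ : Qᵀ * Q = 1 := mul_eq_one_comm.mp hQQ
  have hQBb : ∀ i j, i ≠ j → (Q * Bb * Qᵀ) i j = 0 := by
    intro i j hij
    rw [conj_apply, hQrow, hQrow, hlam j, dotProduct_smul, honu, if_neg hij]
    simp
  have hQB : ∀ i, i ≠ a → (Q * B * Qᵀ) i a = 0 := by
    intro i hia
    rw [conj_apply, hQrow, hQrow, hBua, dotProduct_smul, honu, if_neg hia]
    simp
  have hQBsymm : ((Q * B * Qᵀ)ᵀ) = Q * B * Qᵀ := by
    rw [Matrix.transpose_mul, Matrix.transpose_mul, Matrix.transpose_transpose, hB.eq,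
      Matrix.mul_assoc]
  have hQB' : ∀ i, i ≠ a → (Q * B * Qᵀ) a i = 0 := by
    intro i hia
    have h2 := congrFun (congrFun hQBsymm i) a
    rw [Matrix.transpose_apply] at h2
    rw [h2]
    exact hQB i hia
  -- swap with the last index
  have hl1 : l - 1 < l := by omega
  set last : Fin l := ⟨l - 1, hl1⟩ with hlastdef
  set σ : Equiv.Perm (Fin l) := Equiv.swap a last with hσdef
  set T : Matrix (Fin l) (Fin l) ℝ := Matrix.of (fun i k => if k = σ i then (1:ℝ) else 0)
    with hTdef
  have hTrow : ∀ i, T i = Pi.single (σ i) 1 := by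
    intro i
    funext k
    simp [hTdef, Pi.single_apply]
  have hTT : T * Tᵀ = 1 := by
    ext i j
    rw [Matrix.mul_apply, Matrix.one_apply]
    have h1 : ∑ k, T i k * Tᵀ k j = Pi.single (σ i) 1 ⬝ᵥ Pi.single (σ j) (1:ℝ) := by
      simp [Matrix.transpose_apply, dotProduct, hTrow]
    rw [h1, single_dotProduct, Pi.single_apply]
    by_cases hij : i = j
    · simp [hij]
    · have : σ i ≠ σ j := fun h => hij (σ.injective h)
      simp [hij, this]
  have hTtT : Tᵀ * T = 1 := mul_eq_one_comm.mp hTT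
  have hconjT : ∀ (M : Matrix (Fin l) (Fin l) ℝ) i j, (T * M * Tᵀ) i j = M (σ i) (σ j) := by
    intro M i j
    rw [conj_apply, hTrow, hTrow, Matrix.mulVec_single, single_dotProduct]
    simp
  have hPBb : ∀ M, (T * Q) * M * (T * Q)ᵀ = T * (Q * M * Qᵀ) * Tᵀ := by
    intro M
    rw [Matrix.transpose_mul]
    noncomm_ring
  refine ⟨T * Q, ?_, ?_, ?_⟩
  · rw [Matrix.transpose_mul]
    calc Qᵀ * Tᵀ * (T * Q) = Qᵀ * (Tᵀ * T) * Q := by noncomm_ring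
    _ = 1 := by rw [hTtT, Matrix.mul_one, hQtQ]
  · intro i j hij
    rw [hPBb, hconjT]
    exact hQBb _ _ (fun h => hij (σ.injective h))
  · intro i hi
    have hine : i ≠ last := by
      intro h
      rw [h] at hi
      simp [hlastdef] at hi
    have hσi : σ i ≠ a := by
      intro h
      rw [← Equiv.swap_apply_right a last, ← hσdef] at h
      exact hine (σ.injective h)
    have hσl : σ last = a := by rw [hσdef]; exact Equiv.swap_apply_right a last
    constructor
    · rw [hPBb, hconjT, hσl]
      exact hQB _ hσi
    · rw [hPBb, hconjT, hσl]
      exact hQB' _ hσi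

/-- Lemma 6.3: with `S = S̄`, `dim V = l`, `3 ≤ l ≤ n`, `n ≥ 4`, if `B̄` is
diagonal and `B_ij = 0` for some `i ≠ j`, then there is a new orthonormal basis
in which `B̄` is still diagonal and all off-diagonal entries of `B` in the last
row and last column vanish. -/
theorem stmt2 (n l : ℕ) (hn : 4 ≤ n) (hl : 3 ≤ l) (hln : l ≤ n)
    (B Bb : Matrix (Fin l) (Fin l) ℝ) (hB : B.IsSymm) (hBb : Bb.IsSymm)
    (hS : ∀ i j k m, mobiusS n l B i j k m = mobiusS n l Bb i j k m)
    (hdiag : Bb.IsDiag)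
    (hzero : ∃ i j : Fin l, i ≠ j ∧ B i j = 0) :
    ∃ P : Matrix (Fin l) (Fin l) ℝ, Pᵀ * P = 1 ∧ (P * Bb * Pᵀ).IsDiag ∧
      ∀ i : Fin l, (i : ℕ) < l - 1 →
        (P * B * Pᵀ) i ⟨l - 1, by omega⟩ = 0 ∧
        (P * B * Pᵀ) ⟨l - 1, by omega⟩ i = 0 := by
  obtain ⟨p, q, hpq, hBpq⟩ := hzero
  obtain ⟨a, b, v, μ, ν, hab, hsupp, hv0, hμ, hν⟩ :=
    key n hn hl hln B Bb hB hdiag hS p q hpq hBpq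
  exact construct hl B Bb hB hdiag a b hab v hsupp hv0 μ ν hμ hν
end
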